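/- Let n > 1, let F = GF(2^n), and let k be a field of characteristic 2 with an injective ring homomorphism ι : F → k. Define g : F × F → F by g(x,y) = x + y + x^(2^(n-1))·y^(2^(n-1)) and f(x,y) = g(x,y) + 1. For each (a, b) ∈ F² define the linear form ℓ̃_{a,b} = ι(a)·x + ι(b)·y + ι(g(a,b))·z in k[x,y,z]. Define c̃₀ = ∏_{(a,b) ∈ F², (a,b) ≠ (0,0)} ℓ̃_{a,b}, and c̃₁ = Σ_L ∏_{(a,b) ∈ F² : a·u₁ + b·u₂ ≠ 0} ℓ̃_{a,b}, where the sum runs over all one-dimensional F-subspaces L of F² and (u₁, u₂) is any nonzero vector in L. For A = [[a,b],[c,d]] ∈ SL(2, F), let τ_A be the k-algebra automorphism of k[x,y,z] with x ↦ ι(a)·x + ι(b)·y + ι(f(a,b))·z, y ↦ ι(c)·x + ι(d)·y + ι(f(c,d))·z, z ↦ z. Then c̃₀ and c̃₁ are fixed by τ_A for every A ∈ SL(2, F). -/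

import Mathlib

lemma aux_char2 (F : Type*) [Field F] [Fintype F] (n : ℕ) (hn : 0 < n)
    (hF : Fintype.card F = 2 ^ n) : CharP F 2 := by
  have h0 : ((Fintype.card F : ℕ) : F) = 0 := FiniteField.cast_card_eq_zero F
  rw [hF] at h0
  push_cast at h0
  have h2 : (2 : F) = 0 := pow_eq_zero_iff (by omega) |>.mp h0
  have hdvd : ringChar F ∣ 2 := ringChar.dvd (by exact_mod_cast h2)
  rcases (Nat.dvd_prime Nat.prime_two).mp hdvd with h | h
  · exact absurd h CharP.ringChar_ne_one
  · rw [← h]; exact ringChar.charP F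

lemma aux_key (F : Type*) [Field F] [Fintype F] (n : ℕ) (hn : 0 < n)
    (hF : Fintype.card F = 2 ^ n)
    (a b a' b' c' d' : F) (hdet : a' * d' - b' * c' = 1) :
    (a*a'+b*c') + (a*b'+b*d') + (a*a'+b*c')^(2^(n-1)) * (a*b'+b*d')^(2^(n-1))
      = a * ((a' + b' + a'^(2^(n-1)) * b'^(2^(n-1))) + 1)
        + b * ((c' + d' + c'^(2^(n-1)) * d'^(2^(n-1))) + 1)
        + (a + b + a^(2^(n-1)) * b^(2^(n-1))) := by
  haveI := aux_char2 F n hn hF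
  haveI : Fact (Nat.Prime 2) := ⟨Nat.prime_two⟩
  have h2 : (2 : F) = 0 := by exact_mod_cast CharP.cast_eq_zero F 2
  have hadd : ∀ x y : F, (x + y) ^ 2 ^ (n-1) = x ^ 2 ^ (n-1) + y ^ 2 ^ (n-1) :=
    fun x y => add_pow_char_pow x y 2 (n-1)
  have hsq : ∀ t : F, (t ^ 2 ^ (n-1)) ^ 2 = t := by
    intro t
    rw [← pow_mul]
    have he : 2 ^ (n-1) * 2 = 2 ^ n := by
      rw [← pow_succ, Nat.sub_add_cancel hn]
    rw [he, ← hF, FiniteField.pow_card]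
  have hrel : a' ^ 2^(n-1) * d' ^ 2^(n-1) + b' ^ 2^(n-1) * c' ^ 2^(n-1) = 1 := by
    have h1 : (a' * d' - b' * c') ^ 2 ^ (n-1) = 1 := by rw [hdet, one_pow]
    rw [sub_eq_add_neg, CharTwo.neg_eq, hadd, mul_pow, mul_pow] at h1
    exact h1
  simp only [hadd, mul_pow]
  linear_combination (a' ^ 2^(n-1) * b' ^ 2^(n-1)) * hsq a
    + (c' ^ 2^(n-1) * d' ^ 2^(n-1)) * hsq b
    + (a ^ 2^(n-1) * b ^ 2^(n-1)) * hrel - (a + b) * h2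

open MvPolynomial in
/-- The lifted Dickson invariants `c̃₀ = ∏_{(a,b)≠0} ℓ̃_{a,b}` and
`c̃₁ = Σ_L ∏_{ℓ|_L ≠ 0} ℓ̃_{a,b}` (with `ℓ̃_{a,b} = ι(a)x + ι(b)y + ι(g(a,b))z`) are
invariant under the action `τ_A` of the group `H₁ ≅ SL(2, GF(2^n))` on `k[x,y,z]`. -/
theorem stmt_10 (n : ℕ) (hn : 1 < n) (F : Type*) [Field F] [Fintype F] [DecidableEq F]
    (hF : Fintype.card F = 2 ^ n)
    (k : Type*) [Field k] [CharP k 2] (ι : F →+* k) (hι : Function.Injective ι)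
    (g f : F → F → F)
    (hg : ∀ x y : F, g x y = x + y + x ^ 2 ^ (n - 1) * y ^ 2 ^ (n - 1))
    (hf : ∀ x y : F, f x y = g x y + 1)
    (ℓ : F → F → MvPolynomial (Fin 3) k)
    (hℓ : ∀ a b : F, ℓ a b = C (ι a) * X 0 + C (ι b) * X 1 + C (ι (g a b)) * X 2)
    (c0 : MvPolynomial (Fin 3) k)
    (hc0 : c0 = ∏ v ∈ Finset.univ.erase (0 : F × F), ℓ v.1 v.2)
    (rep : Submodule F (F × F) → F × F)
    (hrep : ∀ L : Submodule F (F × F), Module.finrank F ↥L = 1 → rep L ∈ L ∧ rep L ≠ 0)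
    (c1 : MvPolynomial (Fin 3) k)
    (hc1 : c1 = ∑ᶠ (L : Submodule F (F × F)) (_ : Module.finrank F ↥L = 1),
      ∏ v ∈ Finset.univ.filter (fun v : F × F => v.1 * (rep L).1 + v.2 * (rep L).2 ≠ 0),
        ℓ v.1 v.2)
    (τ : Matrix.SpecialLinearGroup (Fin 2) F →
      MvPolynomial (Fin 3) k →ₐ[k] MvPolynomial (Fin 3) k)
    (hτ : ∀ A : Matrix.SpecialLinearGroup (Fin 2) F,
      τ A = aeval
        ![C (ι (A.1 0 0)) * X 0 + C (ι (A.1 0 1)) * X 1 + C (ι (f (A.1 0 0) (A.1 0 1))) * X 2,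
          C (ι (A.1 1 0)) * X 0 + C (ι (A.1 1 1)) * X 1 + C (ι (f (A.1 1 0) (A.1 1 1))) * X 2,
          X 2]) :
    ∀ A : Matrix.SpecialLinearGroup (Fin 2) F, τ A c0 = c0 ∧ τ A c1 = c1 := by
  classical
  intro A
  have hdet : A.1 0 0 * A.1 1 1 - A.1 0 1 * A.1 1 0 = 1 := by
    have := A.2; rwa [Matrix.det_fin_two] at this
  -- equivariance of linear forms
  have hequiv : ∀ p q : F, τ A (ℓ p q)
      = ℓ (p * A.1 0 0 + q * A.1 1 0) (p * A.1 0 1 + q * A.1 1 1) := by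
    intro p q
    have hgid : g (p * A.1 0 0 + q * A.1 1 0) (p * A.1 0 1 + q * A.1 1 1)
        = p * f (A.1 0 0) (A.1 0 1) + q * f (A.1 1 0) (A.1 1 1) + g p q := by
      rw [hg, hf, hg, hf, hg, hg]
      exact aux_key F n (by omega) hF p q _ _ _ _ hdet
    rw [hτ, hℓ, hℓ, hgid]
    simp only [map_add, map_mul, aeval_C, aeval_X, MvPolynomial.algebraMap_eq,
      Matrix.cons_val_zero, Matrix.cons_val_one, Matrix.head_cons, Matrix.cons_val_two,
      Matrix.tail_cons]
    ring
  -- the coordinate bijection v ↦ v·A and its inverse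
  set m : F × F → F × F :=
    fun v => (v.1 * A.1 0 0 + v.2 * A.1 1 0, v.1 * A.1 0 1 + v.2 * A.1 1 1) with hm
  set m' : F × F → F × F :=
    fun w => (w.1 * A.1 1 1 - w.2 * A.1 1 0, -(w.1 * A.1 0 1) + w.2 * A.1 0 0) with hm'
  have hmm' : ∀ v, m' (m v) = v := by
    intro v
    simp only [hm, hm']
    ext
    · linear_combination v.1 * hdet
    · linear_combination v.2 * hdet
  have hm'm : ∀ w, m (m' w) = w := by
    intro w
    simp only [hm, hm']
    ext
    · linear_combination w.1 * hdet
    · linear_combination w.2 * hdet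
  have hm0 : ∀ v : F × F, v ≠ 0 → m v ≠ 0 := by
    intro v hv h
    apply hv
    rw [← hmm' v, h, hm']
    simp
  -- the dual map σ on representatives
  set σm : F × F → F × F :=
    fun u => (A.1 1 1 * u.1 - A.1 0 1 * u.2, A.1 0 0 * u.2 - A.1 1 0 * u.1) with hσm
  have hdot : ∀ v u : F × F,
      (m v).1 * (σm u).1 + (m v).2 * (σm u).2 = v.1 * u.1 + v.2 * u.2 := by
    intro v u
    simp only [hm, hσm]
    linear_combination (v.1 * u.1 + v.2 * u.2) * hdet
  -- c0 invariance
  have hC0 : τ A c0 = c0 := by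
    rw [hc0, map_prod]
    refine Finset.prod_bij' (fun v _ => m v) (fun w _ => m' w) ?_ ?_ ?_ ?_ ?_
    · intro v hv
      rw [Finset.mem_erase] at hv ⊢
      exact ⟨hm0 v hv.1, Finset.mem_univ _⟩
    · intro w hw
      rw [Finset.mem_erase] at hw ⊢
      refine ⟨fun h => hw.1 ?_, Finset.mem_univ _⟩
      have h' : m' w = 0 := h
      rw [← hm'm w, h', hm]; simp
    · intro v _; exact hmm' v
    · intro w _; exact hm'm w
    · intro v _; exact hequiv v.1 v.2
  refine ⟨hC0, ?_⟩
  -- the summand as a function of the representative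
  set P : F × F → MvPolynomial (Fin 3) k :=
    fun u => ∏ v ∈ Finset.univ.filter (fun v : F × F => v.1 * u.1 + v.2 * u.2 ≠ 0),
      ℓ v.1 v.2 with hP
  have hPτ : ∀ u : F × F, τ A (P u) = P (σm u) := by
    intro u
    rw [hP, map_prod]
    refine Finset.prod_bij' (fun v _ => m v) (fun w _ => m' w) ?_ ?_ ?_ ?_ ?_
    · intro v hv
      rw [Finset.mem_filter] at hv ⊢
      refine ⟨Finset.mem_univ _, ?_⟩
      rw [hdot]; exact hv.2
    · intro w hw
      rw [Finset.mem_filter] at hw ⊢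
      refine ⟨Finset.mem_univ _, ?_⟩
      have := hdot (m' w) u
      rw [hm'm w] at this
      rw [← this]; exact hw.2
    · intro v _; exact hmm' v
    · intro w _; exact hm'm w
    · intro v _; exact hequiv v.1 v.2
  -- P only depends on the line
  have hPind : ∀ L : Submodule F (F × F), Module.finrank F ↥L = 1 →
      ∀ u : F × F, u ∈ L → u ≠ 0 → P u = P (rep L) := by
    intro L hL u huL hu0
    obtain ⟨hrepL, hrep0⟩ := hrep L hL
    have hspan : Submodule.span F {u} = L :=
      Submodule.eq_of_le_of_finrank_eq ((Submodule.span_singleton_le_iff_mem u L).mpr huL)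
        (by rw [finrank_span_singleton hu0, hL])
    obtain ⟨c, hc⟩ := Submodule.mem_span_singleton.mp
      (show rep L ∈ Submodule.span F {u} by rw [hspan]; exact hrepL)
    have hc0' : c ≠ 0 := by
      rintro rfl
      rw [zero_smul] at hc
      exact hrep0 hc.symm
    rw [← hc]
    refine Finset.prod_congr ?_ (fun _ _ => rfl)
    ext v
    simp only [Finset.mem_filter, Finset.mem_univ, true_and, Prod.smul_fst, Prod.smul_snd,
      smul_eq_mul]
    rw [show v.1 * (c * u.1) + v.2 * (c * u.2) = c * (v.1 * u.1 + v.2 * u.2) from by ring,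
      mul_ne_zero_iff]
    simp [hc0']
  -- σ as a linear equivalence, inducing a bijection on lines
  set σe : (F × F) ≃ₗ[F] (F × F) :=
    { toFun := σm
      map_add' := by
        intro x y
        simp only [hσm, Prod.fst_add, Prod.snd_add, Prod.mk_add_mk]
        exact Prod.ext (by ring) (by ring)
      map_smul' := by
        intro c x
        simp only [hσm, Prod.smul_fst, Prod.smul_snd, smul_eq_mul, RingHom.id_apply,
          Prod.smul_mk]
        exact Prod.ext (by ring) (by ring)
      invFun := fun u => (A.1 0 0 * u.1 + A.1 0 1 * u.2, A.1 1 0 * u.1 + A.1 1 1 * u.2)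
      left_inv := by
        intro u
        simp only [hσm]
        exact Prod.ext (by linear_combination u.1 * hdet) (by linear_combination u.2 * hdet)
      right_inv := by
        intro u
        simp only [hσm]
        exact Prod.ext (by linear_combination u.1 * hdet) (by linear_combination u.2 * hdet) }
    with hσe
  have hσe_apply : ∀ u : F × F, σe u = σm u := fun _ => rfl
  set Φ : Submodule F (F × F) ≃o Submodule F (F × F) := Submodule.orderIsoMapComap σe with hΦ
  have hΦ_apply : ∀ L : Submodule F (F × F), Φ L = Submodule.map (σe : (F × F) →ₗ[F] (F × F)) L := fun L =>
    Submodule.orderIsoMapComap_apply σe L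
  have hrank : ∀ L : Submodule F (F × F), Module.finrank F ↥(Φ L) = Module.finrank F ↥L := by
    intro L
    rw [hΦ_apply]
    exact LinearEquiv.finrank_map_eq σe L
  haveI : Finite (Submodule F (F × F)) := inferInstance
  -- c1 invariance
  rw [hc1]
  have hterm : ∀ L : Submodule F (F × F),
      (τ A) (∑ᶠ (_ : Module.finrank F ↥L = 1), P (rep L))
        = if Module.finrank F ↥(Φ L) = 1 then P (rep (Φ L)) else 0 := by
    intro L
    rw [finsum_eq_if, apply_ite (τ A), map_zero, hrank]
    by_cases hL : Module.finrank F ↥L = 1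
    · simp only [hL, if_true]
      rw [hPτ (rep L)]
      have hmem : σm (rep L) ∈ Φ L := by
        rw [hΦ_apply]
        exact Submodule.mem_map_of_mem ((hrep L hL).1)
      have hne : σm (rep L) ≠ 0 := by
        intro h
        apply (hrep L hL).2
        exact σe.injective (a₁ := rep L) (a₂ := 0) (by rw [hσe_apply, h, map_zero])
      exact hPind (Φ L) (by rw [hrank]; exact hL) _ hmem hne
    · simp only [hL, if_false]
  have hmain : (τ A) (∑ᶠ (L : Submodule F (F × F)) (_ : Module.finrank F ↥L = 1), P (rep L))
      = ∑ᶠ (L : Submodule F (F × F)) (_ : Module.finrank F ↥L = 1), P (rep L) := by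
    calc (τ A) (∑ᶠ (L : Submodule F (F × F)) (_ : Module.finrank F ↥L = 1), P (rep L))
        = ∑ᶠ (L : Submodule F (F × F)), (τ A) (∑ᶠ (_ : Module.finrank F ↥L = 1), P (rep L)) :=
          AddMonoidHom.map_finsum (τ A).toAddMonoidHom (Set.toFinite _)
      _ = ∑ᶠ (L : Submodule F (F × F)),
            if Module.finrank F ↥(Φ L) = 1 then P (rep (Φ L)) else 0 := finsum_congr hterm
      _ = ∑ᶠ (L : Submodule F (F × F)),
            if Module.finrank F ↥L = 1 then P (rep L) else 0 :=
          finsum_eq_of_bijective (fun L => Φ L) Φ.toEquiv.bijective (fun L => rfl)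
      _ = ∑ᶠ (L : Submodule F (F × F)) (_ : Module.finrank F ↥L = 1), P (rep L) := by
          simp only [finsum_eq_if]
  exact hmain
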